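/- Let X be a real Banach space and suppose there exist a compact set K ⊆ X and δ > 0 such that sup_{h ∈ K} ‖h − S h‖ ≥ δ for every finite-rank continuous linear operator S : X → X (a quantitative failure of the approximation property at K). Then for every cylindrical map G = D ∘ f ∘ E from X to X with f : ℝ^N → ℝ^{N'} Fréchet differentiable, and every x ∈ X, it holds sup_{h ∈ K} ‖h − DG(x) h‖ ≥ δ. Consequently the identity map of X cannot be approximated, together with its first derivative evaluated at directions in K, by cylindrical maps; the approximation property is necessary for universal approximation in the C^1 compact-open topology with directional seminorms. -/

import Mathlib

open MeasureTheory
open scoped Topology ENNReal NNReal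

/-- if the approximation property fails quantitatively at a compact set `K`
(every finite-rank operator `S` satisfies `sup_{h ∈ K} ‖h − S h‖ ≥ δ`), then for every
cylindrical map `G = D ∘ f ∘ E` with `f` differentiable and every `x`,
`sup_{h ∈ K} ‖h − DG(x) h‖ ≥ δ`: the identity cannot be approximated together with its
derivative by cylindrical maps. -/
theorem stmt_4 {X : Type*} [NormedAddCommGroup X] [NormedSpace ℝ X] [CompleteSpace X]
    (K : Set X) (hK : IsCompact K) (δ : ℝ) (hδ : 0 < δ)
    (hAP : ∀ S : X →L[ℝ] X, FiniteDimensional ℝ (LinearMap.range (S : X →ₗ[ℝ] X)) →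
      δ ≤ ⨆ h ∈ K, ‖h - S h‖)
    (N N' : ℕ) (E : X →L[ℝ] (Fin N → ℝ)) (f : (Fin N → ℝ) → (Fin N' → ℝ))
    (D : (Fin N' → ℝ) →L[ℝ] X) (hf : Differentiable ℝ f) (x : X) :
    δ ≤ ⨆ h ∈ K, ‖h - fderiv ℝ (fun y : X => D (f (E y))) x h‖ := by
  set S : X →L[ℝ] X := D.comp ((fderiv ℝ f (E x)).comp E) with hS
  have hderiv : fderiv ℝ (fun y : X => D (f (E y))) x = S := by
    have h1 : HasFDerivAt (fun y : X => D (f (E y))) S x := by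
      have hE : HasFDerivAt E (E : X →L[ℝ] (Fin N → ℝ)) x := E.hasFDerivAt
      have hfE : HasFDerivAt f (fderiv ℝ f (E x)) (E x) := (hf (E x)).hasFDerivAt
      have hD : HasFDerivAt D (D : (Fin N' → ℝ) →L[ℝ] X) (f (E x)) := D.hasFDerivAt
      exact hD.comp x (hfE.comp x hE)
    exact h1.fderiv
  rw [hderiv]
  apply hAP
  have hle : LinearMap.range (S : X →ₗ[ℝ] X) ≤ LinearMap.range (D : (Fin N' → ℝ) →ₗ[ℝ] X) := by
    rintro y ⟨z, rfl⟩
    exact ⟨_, rfl⟩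
  have : FiniteDimensional ℝ (LinearMap.range (D : (Fin N' → ℝ) →ₗ[ℝ] X)) :=
    LinearMap.finiteDimensional_range _
  exact Submodule.finiteDimensional_of_le hle
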